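/- Let (X,S) be a minimal subshift over a finite alphabet A, and let c : A* → ℝ/ℤ be a coboundary (a monoid morphism vanishing on all return words). Then there exists a monoid morphism c̃ : A* → ℝ which is a real coboundary (vanishes on abelianizations of all return words) and satisfies c̃(w) ≡ c(w) (mod ℤ) for every word w in the language of X. -/
import Mathlib


/-- The shift map on one-sided infinite words. -/
def shiftN {A : Type*} (x : ℕ → A) : ℕ → A := fun n => x (n + 1)

/-- The factor of `x` of length `l` starting at position `k`. -/
def factorN {A : Type*} (x : ℕ → A) (k l : ℕ) : List A := (List.range l).map (fun i => x (k + i))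

/-- The language of a subshift: the set of finite factors of its elements. -/
def languageN {A : Type*} (X : Set (ℕ → A)) : Set (List A) :=
  {w | ∃ x ∈ X, ∃ k, w = factorN x k w.length}

/-- `w` is a return word for the language `L`: `w ≠ ε`, `w · w₀ ∈ L`, and the first letter
`w₀` occurs exactly once in `w`. -/
def IsReturnWord {A : Type*} [DecidableEq A] (L : Set (List A)) (w : List A) : Prop :=
  ∃ (a : A) (u : List A), w = a :: u ∧ w ++ [a] ∈ L ∧ w.count a = 1

namespace RCAux

variable {A : Type*}

lemma shift_iter (x : ℕ → A) (p : ℕ) : shiftN^[p] x = fun i => x (i + p) := by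
  induction p generalizing x with
  | zero => funext i; simp
  | succ p ih =>
      funext i
      rw [Function.iterate_succ_apply, ih (shiftN x)]
      simp [shiftN]; ring_nf

lemma factorN_length (x : ℕ → A) (k l : ℕ) : (factorN x k l).length = l := by simp [factorN]

lemma factorN_succ (x : ℕ → A) (k l : ℕ) :
    factorN x k (l + 1) = factorN x k l ++ [x (k + l)] := by
  simp [factorN, List.range_succ]

lemma factorN_cons (x : ℕ → A) (l : ℕ) :
    factorN x 0 (l + 1) = x 0 :: factorN (shiftN x) 0 l := by
  simp [factorN, List.range_succ_eq_map, List.map_map, shiftN, Function.comp, Nat.add_comm]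

lemma factorN_congr (x y : ℕ → A) (l : ℕ) (h : ∀ i < l, x i = y i) :
    factorN x 0 l = factorN y 0 l := by
  simp only [factorN]
  refine List.map_congr_left (fun i hi => ?_)
  rw [List.mem_range] at hi
  simp [h i hi]


lemma iter_mem {X : Set (ℕ → A)} (hinv : ∀ x ∈ X, shiftN x ∈ X) {x : ℕ → A}
    (hx : x ∈ X) (n : ℕ) : shiftN^[n] x ∈ X := by
  induction n with
  | zero => simpa using hx
  | succ n ih => rw [Function.iterate_succ_apply']; exact hinv _ ih

lemma factorN_shift (x : ℕ → A) (k l : ℕ) : factorN (shiftN^[k] x) 0 l = factorN x k l := by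
  rw [shift_iter]
  simp only [factorN]
  refine List.map_congr_left (fun i _ => ?_)
  show x (0 + i + k) = x (k + i)
  congr 1
  omega

lemma mem_language_iff {X : Set (ℕ → A)} (hinv : ∀ x ∈ X, shiftN x ∈ X) (w : List A) :
    w ∈ languageN X ↔ ∃ x ∈ X, w = factorN x 0 w.length := by
  constructor
  · rintro ⟨x, hx, k, hw⟩
    refine ⟨shiftN^[k] x, iter_mem hinv hx k, ?_⟩
    rw [factorN_shift]
    exact hw
  · rintro ⟨x, hx, hw⟩
    exact ⟨x, hx, 0, hw⟩

lemma factor_mem_language {X : Set (ℕ → A)} {x : ℕ → A} (hx : x ∈ X) (l : ℕ) :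
    factorN x 0 l ∈ languageN X := ⟨x, hx, 0, by rw [factorN_length]⟩

variable [TopologicalSpace A] [DiscreteTopology A]

lemma visit {X : Set (ℕ → A)}
    (hmin : ∀ x ∈ X, closure {y | ∃ n : ℕ, y = shiftN^[n] x} = X)
    {x y : ℕ → A} (hx : x ∈ X) (hy : y ∈ X) (m : ℕ) :
    ∃ p, ∀ i < m, x (i + p) = y i := by
  have hU : IsOpen {z : ℕ → A | ∀ i < m, z i = y i} := by
    have : {z : ℕ → A | ∀ i < m, z i = y i} = ⋂ i ∈ Finset.range m, (fun z : ℕ → A => z i) ⁻¹' {y i} := by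
      ext z; simp [Finset.mem_range]
    rw [this]
    exact isOpen_biInter_finset fun i _ => (isOpen_discrete _).preimage (continuous_apply i)
  have hyc : y ∈ closure {z | ∃ n : ℕ, z = shiftN^[n] x} := by rw [hmin x hx]; exact hy
  obtain ⟨z, hz1, n, rfl⟩ := mem_closure_iff.mp hyc _ hU (fun i hi => rfl)
  refine ⟨n, fun i hi => ?_⟩
  have := hz1 i hi
  rwa [shift_iter] at this

noncomputable def tauF (a₀ : A) (x : ℕ → A) : ℕ := sInf {n | x n = a₀}

noncomputable def gF (c : A → AddCircle (1 : ℝ)) (a₀ : A) (x : ℕ → A) : AddCircle (1 : ℝ) :=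
  ((factorN x 0 (tauF a₀ x)).map c).sum

lemma tau_spec {a₀ : A} {x : ℕ → A} (h : ∃ n, x n = a₀) : x (tauF a₀ x) = a₀ :=
  Nat.sInf_mem h

lemma tau_min {a₀ : A} {x : ℕ → A} {i : ℕ} (h : i < tauF a₀ x) : x i ≠ a₀ :=
  Nat.notMem_of_lt_sInf h


section Cocycle

variable [DecidableEq A] {X : Set (ℕ → A)} {c : A → AddCircle (1 : ℝ)} {a₀ : A}

lemma g_cocycle (hinv : ∀ x ∈ X, shiftN x ∈ X)
    (hc : ∀ w, IsReturnWord (languageN X) w → (w.map c).sum = 0)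
    (hA : ∀ x ∈ X, ∃ n, x n = a₀) {x : ℕ → A} (hx : x ∈ X) :
    gF c a₀ x = c (x 0) + gF c a₀ (shiftN x) := by
  have hSx : shiftN x ∈ X := hinv x hx
  have hAx := hA x hx
  have hASx := hA _ hSx
  set m := tauF a₀ (shiftN x) with hm
  by_cases h0 : tauF a₀ x = 0
  · have hx0 : x 0 = a₀ := by have := tau_spec hAx; rwa [h0] at this
    have hxm : x (m + 1) = a₀ := tau_spec hASx
    have hw : IsReturnWord (languageN X) (factorN x 0 (m + 1)) := by
      refine ⟨a₀, factorN (shiftN x) 0 m, ?_, ?_, ?_⟩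
      · rw [factorN_cons, hx0]
      · have he : factorN x 0 (m + 1) ++ [a₀] = factorN x 0 (m + 1 + 1) := by
          rw [factorN_succ x 0 (m + 1)]
          simp [hxm]
        rw [he]
        exact factor_mem_language hx _
      · rw [factorN_cons, hx0, List.count_cons]
        have : (factorN (shiftN x) 0 m).count a₀ = 0 := by
          rw [List.count_eq_zero]
          intro hb
          simp only [factorN, List.mem_map, List.mem_range] at hb
          obtain ⟨i, hi, hbe⟩ := hb
          exact tau_min (by omega : (0:ℕ) + i < tauF a₀ (shiftN x)) hbe
        simp [this]
    have hsum := hc _ hw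
    rw [factorN_cons, hx0] at hsum
    simp only [List.map_cons, List.sum_cons] at hsum
    have hgx : gF c a₀ x = 0 := by
      rw [gF, h0]
      simp [factorN]
    rw [hgx, gF, ← hm, hx0]
    rw [← hsum]
  · obtain ⟨l, hl⟩ : ∃ l, tauF a₀ x = l + 1 := ⟨tauF a₀ x - 1, by omega⟩
    have hτS : m = l := by
      have h1 : m ≤ l := Nat.sInf_le (by
        show x (l + 1) = a₀
        rw [← hl]; exact tau_spec hAx)
      rcases Nat.lt_or_ge m l with h2 | h2
      · exfalso
        have := tau_spec hASx
        exact tau_min (x := x) (by omega : m + 1 < tauF a₀ x) this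
      · omega
    rw [gF, gF, hl, ← hm, hτS, factorN_cons]
    simp

lemma g_cocycle_iter (hinv : ∀ x ∈ X, shiftN x ∈ X)
    (hc : ∀ w, IsReturnWord (languageN X) w → (w.map c).sum = 0)
    (hA : ∀ x ∈ X, ∃ n, x n = a₀) (n : ℕ) :
    ∀ x ∈ X, gF c a₀ x = ((factorN x 0 n).map c).sum + gF c a₀ (shiftN^[n] x) := by
  induction n with
  | zero => intro x hx; simp [factorN]
  | succ n ih =>
      intro x hx
      rw [g_cocycle hinv hc hA hx, ih (shiftN x) (hinv x hx), factorN_cons,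
        Function.iterate_succ_apply]
      simp only [List.map_cons, List.sum_cons]
      abel


lemma g_chain (hinv : ∀ x ∈ X, shiftN x ∈ X)
    (hc : ∀ w, IsReturnWord (languageN X) w → (w.map c).sum = 0)
    (hA : ∀ x ∈ X, ∃ n, x n = a₀) :
    ∀ p : ℕ, ∀ x ∈ X, x p = x 0 → gF c a₀ x = gF c a₀ (shiftN^[p] x) := by
  intro p
  induction p using Nat.strong_induction_on with
  | _ p ih =>
    intro x hx hp
    rcases Nat.eq_zero_or_pos p with rfl | hpos
    · simp
    · set S : Set ℕ := {q | 0 < q ∧ q ≤ p ∧ x q = x 0} with hS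
      have hSne : S.Nonempty := ⟨p, hpos, le_refl _, hp⟩
      set q := sInf S with hqdef
      obtain ⟨hq0, hqp, hqx⟩ : 0 < q ∧ q ≤ p ∧ x q = x 0 := Nat.sInf_mem hSne
      obtain ⟨l, hl⟩ : ∃ l, q = l + 1 := ⟨q - 1, by omega⟩
      have hmid : ∀ i, 0 < i → i < q → x i ≠ x 0 := by
        intro i hi1 hi2 hcon
        exact absurd (⟨hi1, by omega, hcon⟩ : i ∈ S) (Nat.notMem_of_lt_sInf hi2)
      have hw : IsReturnWord (languageN X) (factorN x 0 q) := by
        refine ⟨x 0, factorN (shiftN x) 0 l, ?_, ?_, ?_⟩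
        · rw [hl, factorN_cons]
        · have he : factorN x 0 q ++ [x 0] = factorN x 0 (q + 1) := by
            rw [factorN_succ x 0 q]
            simp [hqx]
          rw [he]
          exact factor_mem_language hx _
        · rw [hl, factorN_cons, List.count_cons]
          have : (factorN (shiftN x) 0 l).count (x 0) = 0 := by
            rw [List.count_eq_zero]
            intro hb
            simp only [factorN, List.mem_map, List.mem_range] at hb
            obtain ⟨i, hi, hbe⟩ := hb
            exact hmid (i + 1) (by omega) (by omega) (by simpa [shiftN] using hbe)
          simp [this]
      have h1 : gF c a₀ x = gF c a₀ (shiftN^[q] x) := by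
        rw [g_cocycle_iter hinv hc hA q x hx, hc _ hw, zero_add]
      rcases eq_or_lt_of_le hqp with he | hlt
      · exact he ▸ h1
      · have hq' : (shiftN^[q] x) (p - q) = (shiftN^[q] x) 0 := by
          rw [shift_iter]
          show x (p - q + q) = x (0 + q)
          have : p - q + q = p := by omega
          rw [this, Nat.zero_add, hp, hqx]
        have h2 := ih (p - q) (by omega) (shiftN^[q] x) (iter_mem hinv hx q) hq'
        rw [h1, h2, ← Function.iterate_add_apply, Nat.sub_add_cancel hqp]

lemma g_congr (hA : ∀ x ∈ X, ∃ n, x n = a₀) {x y : ℕ → A} (hx : x ∈ X) (hy : y ∈ X)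
    (h : ∀ i ≤ tauF a₀ y, x i = y i) : gF c a₀ x = gF c a₀ y := by
  have hτ : tauF a₀ x = tauF a₀ y := by
    have h1 : tauF a₀ x ≤ tauF a₀ y :=
      Nat.sInf_le (show x (tauF a₀ y) = a₀ by rw [h _ le_rfl]; exact tau_spec (hA y hy))
    rcases eq_or_lt_of_le h1 with he | h2
    · exact he
    · exfalso
      have := tau_spec (hA x hx)
      rw [h _ (le_of_lt h2)] at this
      exact tau_min h2 this
  rw [gF, gF, hτ, factorN_congr x y _ (fun i hi => h i (by omega))]

lemma g_letter (hinv : ∀ x ∈ X, shiftN x ∈ X)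
    (hmin : ∀ x ∈ X, closure {y | ∃ n : ℕ, y = shiftN^[n] x} = X)
    (hc : ∀ w, IsReturnWord (languageN X) w → (w.map c).sum = 0)
    (hA : ∀ x ∈ X, ∃ n, x n = a₀) {x y : ℕ → A} (hx : x ∈ X) (hy : y ∈ X)
    (h0 : x 0 = y 0) : gF c a₀ x = gF c a₀ y := by
  obtain ⟨p, hp⟩ := visit hmin hx hy (tauF a₀ y + 1)
  have hxp : x p = x 0 := by
    have := hp 0 (by omega)
    rw [Nat.zero_add] at this
    rw [this, h0]
  calc gF c a₀ x = gF c a₀ (shiftN^[p] x) := g_chain hinv hc hA p x hx hxp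
    _ = gF c a₀ y := by
        refine g_congr hA (iter_mem hinv hx p) hy (fun i hi => ?_)
        rw [shift_iter]
        exact hp i (by omega)

end Cocycle

end RCAux

namespace RCAux

lemma cast_list_sum (l : List ℝ) :
    ((l.sum : ℝ) : AddCircle (1 : ℝ))
      = (l.map (QuotientAddGroup.mk : ℝ → AddCircle (1 : ℝ))).sum := by
  induction l with
  | nil => simp
  | cons a t ih => simp [QuotientAddGroup.mk_add, ih]

lemma list_range_sum (f : ℕ → ℝ) (n : ℕ) :
    ((List.range n).map f).sum = ∑ i ∈ Finset.range n, f i := by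
  induction n with
  | zero => simp
  | succ n ih => rw [List.range_succ, Finset.sum_range_succ]; simp [ih]

end RCAux

open RCAux

/-- Every coboundary `c : A* → ℝ/ℤ` of a minimal subshift has a representative
`c̃ : A* → ℝ` which is a real coboundary, i.e. `c̃` vanishes on all return words and
`c̃(w) ≡ c(w) mod ℤ` for every word `w` in the language. (Morphisms are described by
their values on letters, extended additively to words.) -/
theorem coboundary_has_real_representative
    {A : Type*} [Fintype A] [DecidableEq A]
    [TopologicalSpace A] [DiscreteTopology A]
    (X : Set (ℕ → A)) (hne : X.Nonempty) (hcl : IsClosed X)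
    (hinv : ∀ x ∈ X, shiftN x ∈ X)
    (hmin : ∀ x ∈ X, closure {y | ∃ n : ℕ, y = shiftN^[n] x} = X)
    (c : A → AddCircle (1 : ℝ))
    (hc : ∀ w, IsReturnWord (languageN X) w → (w.map c).sum = 0) :
    ∃ ct : A → ℝ,
      (∀ w, IsReturnWord (languageN X) w → (w.map ct).sum = 0) ∧
      ∀ w ∈ languageN X, (((w.map ct).sum : ℝ) : AddCircle (1 : ℝ)) = (w.map c).sum := by
  classical
  obtain ⟨xs, hxs⟩ := hne
  set a₀ := xs 0 with ha₀
  have hA : ∀ x ∈ X, ∃ n, x n = a₀ := by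
    intro x hx
    obtain ⟨p, hp⟩ := visit hmin hx hxs 1
    exact ⟨p, by simpa using hp 0 one_pos⟩
  have hρex : ∀ t : AddCircle (1 : ℝ), ∃ r : ℝ, (r : AddCircle (1 : ℝ)) = t :=
    fun t => ⟨t.out, QuotientAddGroup.out_eq' t⟩
  choose ρ hρ using hρex
  set γ : A → AddCircle (1 : ℝ) := fun b =>
    if h : ∃ z, z ∈ X ∧ z 0 = b then gF c a₀ h.choose else 0 with hγdef
  have hγg : ∀ x, x ∈ X → γ (x 0) = gF c a₀ x := by
    intro x hx
    have h : ∃ z, z ∈ X ∧ z 0 = x 0 := ⟨x, hx, rfl⟩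
    have h2 : γ (x 0) = gF c a₀ h.choose := by
      show (if h : ∃ z, z ∈ X ∧ z 0 = x 0 then gF c a₀ h.choose else 0) = _
      rw [dif_pos h]
    rw [h2]
    exact g_letter hinv hmin hc hA h.choose_spec.1 hx h.choose_spec.2
  have hsucc : ∀ x, x ∈ X → γ (x 0) - c (x 0) = γ (x 1) := by
    intro x hx
    have h1 : γ (x 1) = gF c a₀ (shiftN x) := hγg (shiftN x) (hinv x hx)
    rw [hγg x hx, g_cocycle hinv hc hA hx, h1]
    abel
  set ct : A → ℝ := fun b =>
    if ∃ z, z ∈ X ∧ z 0 = b then ρ (γ b) - ρ (γ b - c b) else 0 with hctdef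
  have hct_val : ∀ b, (∃ z, z ∈ X ∧ z 0 = b) → ct b = ρ (γ b) - ρ (γ b - c b) := by
    intro b hb
    show (if _ : _ then _ else _) = _
    rw [dif_pos hb]
  refine ⟨ct, ?_, ?_⟩
  · rintro w ⟨a, u, hwa, hwL, -⟩
    rw [mem_language_iff hinv] at hwL
    obtain ⟨x, hx, hfac⟩ := hwL
    set n := w.length with hn
    have hlen : (w ++ [a]).length = n + 1 := by simp [hn]
    rw [hlen, factorN_succ] at hfac
    obtain ⟨hw1, hw2⟩ := List.append_inj hfac (by rw [factorN_length, hn])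
    have hxn : x n = a := by
      have := hw2
      simp only [List.cons.injEq, and_true, Nat.zero_add] at this
      exact this.symm
    have hx0 : x 0 = a := by
      have hn' : n = u.length + 1 := by rw [hn, hwa]; simp
      rw [hn', factorN_cons, hwa] at hw1
      injection hw1 with h1 _
      exact h1.symm
    have hterm : ∀ i < n, ct (x i) = ρ (γ (x i)) - ρ (γ (x (i + 1))) := by
      intro i hi
      have hxi : shiftN^[i] x ∈ X := iter_mem hinv hx i
      have e0 : (shiftN^[i] x) 0 = x i := by rw [shift_iter]; simp
      have e1 : (shiftN^[i] x) 1 = x (i + 1) := by rw [shift_iter]; simp [Nat.add_comm]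
      have hocc : ∃ z, z ∈ X ∧ z 0 = x i := ⟨shiftN^[i] x, hxi, e0⟩
      have hs := hsucc _ hxi
      rw [e0, e1] at hs
      rw [hct_val _ hocc, hs]
    rw [hw1]
    have hsum : ((factorN x 0 n).map ct).sum
        = ∑ i ∈ Finset.range n, (ρ (γ (x i)) - ρ (γ (x (i + 1)))) := by
      simp only [factorN, List.map_map]
      rw [list_range_sum]
      refine Finset.sum_congr rfl (fun i hi => ?_)
      rw [Finset.mem_range] at hi
      show ct (x (0 + i)) = _
      rw [Nat.zero_add]
      exact hterm i hi
    rw [hsum, Finset.sum_range_sub']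
    have : x n = x 0 := by rw [hxn, hx0]
    rw [this, sub_self]
  · intro w hwL
    rw [mem_language_iff hinv] at hwL
    obtain ⟨x, hx, hfac⟩ := hwL
    rw [hfac, cast_list_sum, List.map_map]
    refine congrArg List.sum ?_
    refine List.map_congr_left (fun b hb => ?_)
    simp only [factorN, List.mem_map, List.mem_range] at hb
    obtain ⟨i, hi, rfl⟩ := hb
    have hxi : shiftN^[i] x ∈ X := iter_mem hinv hx i
    have e0 : (shiftN^[i] x) 0 = x (0 + i) := by rw [shift_iter]
    have hocc : ∃ z, z ∈ X ∧ z 0 = x (0 + i) := ⟨shiftN^[i] x, hxi, e0⟩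
    show ((ct (x (0 + i)) : ℝ) : AddCircle (1 : ℝ)) = c (x (0 + i))
    rw [hct_val _ hocc, QuotientAddGroup.mk_sub, hρ, hρ]
    exact sub_sub_cancel _ _
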